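/- arXiv:0808.2801 — 4 statements merged into one kernel-verified Lean document; each statement's English description precedes it below -/
import Mathlib

section
/- For any two Poisson distributions with parameters λ and λ₀ where λ = λ₀ + D, D > 0 and λ₀ > 0, the total variation distance between Poisson(λ) and Poisson(λ₀) is at most D·√(2/λ₀). -/
/-- The Poisson pmf on ℕ with rate `r`: `Poisson(r)({k}) = e^{-r} r^k / k!`. -/
noncomputable def poissonPMF (r : ℝ) (k : ℕ) : ℝ :=
  Real.exp (-r) * r ^ k / (Nat.factorial k)

lemma exp_tsum' (x : ℝ) : ∑' n : ℕ, x ^ n / (n.factorial : ℝ) = Real.exp x := by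
  rw [Real.exp_eq_exp_ℝ, NormedSpace.exp_eq_tsum_div]

lemma poisson_eq (r : ℝ) (k : ℕ) :
    poissonPMF r k = Real.exp (-r) * (r ^ k / (k.factorial : ℝ)) := by
  rw [poissonPMF]; ring

lemma poisson_summable (r : ℝ) : Summable (poissonPMF r) := by
  have h := (Real.summable_pow_div_factorial r).mul_left (Real.exp (-r))
  rw [show poissonPMF r = fun k => Real.exp (-r) * (r ^ k / (k.factorial : ℝ)) from
    funext (poisson_eq r)]
  exact h

lemma poisson_tsum (r : ℝ) : ∑' k, poissonPMF r k = 1 := by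
  simp_rw [poisson_eq]
  rw [tsum_mul_left, exp_tsum', ← Real.exp_add]
  simp

lemma poisson_pos {r : ℝ} (hr : 0 < r) (k : ℕ) : 0 < poissonPMF r k := by
  rw [poissonPMF]
  positivity

lemma chisq_eq (lam lam0 : ℝ) (hlam0 : 0 < lam0) (k : ℕ) :
    (poissonPMF lam k) ^ 2 / poissonPMF lam0 k
      = Real.exp (lam0 - 2 * lam) * ((lam ^ 2 / lam0) ^ k / (k.factorial : ℝ)) := by
  have hk : (k.factorial : ℝ) ≠ 0 := by positivity
  have h0 : lam0 ^ k ≠ 0 := by positivity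
  have he : Real.exp (-lam0) ≠ 0 := Real.exp_ne_zero _
  have he2 : Real.exp (lam0 - 2 * lam) * Real.exp (-lam0) = Real.exp (-lam) ^ 2 := by
    rw [sq, ← Real.exp_add, ← Real.exp_add]; ring_nf
  rw [poissonPMF, poissonPMF]
  rw [div_pow]
  field_simp
  rw [← he2, show lam0 - lam * 2 = lam0 - 2 * lam by ring, div_pow]
  field_simp
  ring

/-- If `λ = λ₀ + D` with `D > 0` and `λ₀ > 0`, then the total variation distance
between `Poisson(λ)` and `Poisson(λ₀)` is at most `D·√(2/λ₀)`. -/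
theorem stmt_0 (lam lam0 D : ℝ) (hD : 0 < D) (hlam0 : 0 < lam0)
    (hlam : lam = lam0 + D) :
    (1 / 2) * ∑' k : ℕ, |poissonPMF lam k - poissonPMF lam0 k| ≤
      D * Real.sqrt (2 / lam0) := by
  have hlampos : 0 < lam := by linarith
  set p := poissonPMF lam with hpdef
  set q := poissonPMF lam0 with hqdef
  have hp : Summable p := poisson_summable lam
  have hq : Summable q := poisson_summable lam0
  have hppos : ∀ k, 0 < p k := poisson_pos hlampos
  have hqpos : ∀ k, 0 < q k := poisson_pos hlam0
  set t : ℝ := D ^ 2 / lam0 with ht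
  have htpos : 0 < t := by positivity
  -- chi-square sum
  have hAeq : ∀ k, p k ^ 2 / q k
      = Real.exp (lam0 - 2 * lam) * ((lam ^ 2 / lam0) ^ k / (k.factorial : ℝ)) :=
    chisq_eq lam lam0 hlam0
  have hAsum : Summable (fun k => p k ^ 2 / q k) := by
    rw [funext hAeq]
    exact (Real.summable_pow_div_factorial _).mul_left _
  have hAtsum : (∑' k, p k ^ 2 / q k) = Real.exp t := by
    rw [funext hAeq, tsum_mul_left, exp_tsum', ← Real.exp_add]
    congr 1
    subst hlam; rw [ht]; field_simp; ring
  have hf2eq : ∀ k, (p k - q k) ^ 2 / q k = p k ^ 2 / q k - 2 * p k + q k := by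
    intro k
    have h := (hqpos k).ne'
    field_simp
    ring
  have hf2sum : Summable (fun k => (p k - q k) ^ 2 / q k) := by
    rw [funext hf2eq]
    exact (hAsum.sub (hp.mul_left 2)).add hq
  have hf2tsum : (∑' k, (p k - q k) ^ 2 / q k) = Real.exp t - 1 := by
    rw [funext hf2eq, Summable.tsum_add (hAsum.sub (hp.mul_left 2)) hq,
      Summable.tsum_sub hAsum (hp.mul_left 2), tsum_mul_left, hAtsum, poisson_tsum, poisson_tsum]
    ring
  -- absolute differences: summable and total ≤ 2
  have hbound : ∀ k, |p k - q k| ≤ p k + q k := by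
    intro k
    rw [abs_sub_le_iff]
    constructor <;> nlinarith [hppos k, hqpos k]
  have habs_sum : Summable (fun k => |p k - q k|) :=
    Summable.of_nonneg_of_le (fun k => abs_nonneg _) hbound (hp.add hq)
  set S := ∑' k, |p k - q k| with hSdef
  have hS2 : S ≤ 2 := by
    have h := Summable.tsum_le_tsum hbound habs_sum (hp.add hq)
    rw [Summable.tsum_add hp hq, poisson_tsum, poisson_tsum] at h
    linarith
  -- Cauchy–Schwarz: S ≤ √(exp t − 1)
  have hCS : S ≤ Real.sqrt (Real.exp t - 1) := by
    apply Summable.tsum_le_of_sum_le habs_sum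
    intro s
    have h1 : ∀ k ∈ s, |p k - q k|
        = (|p k - q k| / Real.sqrt (q k)) * Real.sqrt (q k) := by
      intro k _
      rw [div_mul_cancel₀]
      exact (Real.sqrt_pos.2 (hqpos k)).ne'
    have heq1 : ∀ k, (|p k - q k| / Real.sqrt (q k)) ^ 2 = (p k - q k) ^ 2 / q k := by
      intro k
      rw [div_pow, sq_abs, Real.sq_sqrt (hqpos k).le]
    have heq2 : ∀ k : ℕ, (Real.sqrt (q k)) ^ 2 = q k := fun k => Real.sq_sqrt (hqpos k).le
    calc ∑ k ∈ s, |p k - q k|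
        = ∑ k ∈ s, (|p k - q k| / Real.sqrt (q k)) * Real.sqrt (q k) :=
          Finset.sum_congr rfl h1
      _ ≤ Real.sqrt (∑ k ∈ s, (|p k - q k| / Real.sqrt (q k)) ^ 2)
          * Real.sqrt (∑ k ∈ s, (Real.sqrt (q k)) ^ 2) :=
          Real.sum_mul_le_sqrt_mul_sqrt _ _ _
      _ ≤ Real.sqrt (Real.exp t - 1) * Real.sqrt 1 := by
          gcongr
          · rw [Finset.sum_congr rfl fun k _ => heq1 k, ← hf2tsum]
            exact Summable.sum_le_tsum s (fun k _ => div_nonneg (sq_nonneg _) (hqpos k).le) hf2sum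
          · rw [Finset.sum_congr rfl fun k _ => heq2 k, ← poisson_tsum lam0]
            exact Summable.sum_le_tsum s (fun k _ => (hqpos k).le) hq
      _ = Real.sqrt (Real.exp t - 1) := by rw [Real.sqrt_one, mul_one]
  -- rewrite the goal
  have hgoal_eq : D * Real.sqrt (2 / lam0) = Real.sqrt (2 * t) := by
    rw [ht, show 2 * (D ^ 2 / lam0) = D ^ 2 * (2 / lam0) by ring,
      Real.sqrt_mul (by positivity), Real.sqrt_sq hD.le]
  rw [hgoal_eq]
  rcases le_or_gt 1 (2 * t) with h | h
  · have h1 : Real.sqrt 1 ≤ Real.sqrt (2 * t) := Real.sqrt_le_sqrt h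
    rw [Real.sqrt_one] at h1
    linarith
  · -- small t case
    have hexp : Real.exp t - 1 ≤ 8 * t := by
      have h1 : 1 - t ≤ Real.exp (-t) := by
        have := Real.add_one_le_exp (-t); linarith
      have h2 : Real.exp t * (1 - t) ≤ 1 := by
        have h3 : Real.exp t * Real.exp (-t) = 1 := by
          rw [← Real.exp_add]; simp
        nlinarith [Real.exp_pos t]
      have h4 : Real.exp t ≤ Real.exp (1 / 2) := Real.exp_le_exp.2 (by linarith)
      have h5 : Real.exp (1 / 2) * Real.exp (1 / 2) = Real.exp 1 := by
        rw [← Real.exp_add]; norm_num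
      have h6 : Real.exp (1 / 2) ≤ 2 := by
        nlinarith [Real.exp_one_lt_d9, Real.exp_pos (1 / 2)]
      nlinarith [Real.exp_pos t]
    have h8 : Real.sqrt (Real.exp t - 1) ≤ Real.sqrt (8 * t) := Real.sqrt_le_sqrt hexp
    have h9 : Real.sqrt (8 * t) = 2 * Real.sqrt (2 * t) := by
      rw [show (8 : ℝ) * t = 2 ^ 2 * (2 * t) by ring,
        Real.sqrt_mul (by positivity), Real.sqrt_sq (by norm_num)]
    linarith
end

section
/- Given real numbers q₁,…,qₙ ∈ [0,1] and an integer z > 0, there exist p₁,…,pₙ ∈ [0,1] such that each pᵢ is an integer multiple of 1/z, |pᵢ − qᵢ| ≤ 1/z for all i, pᵢ = 0 whenever qᵢ = 0, and |∑ᵢ pᵢ − ∑ᵢ qᵢ| ≤ 1/z. -/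
lemma floor_diff_close (a b : ℝ) : |((⌊b⌋ - ⌊a⌋ : ℤ) : ℝ) - (b - a)| < 1 := by
  have h1 := Int.floor_le a
  have h2 := Int.floor_le b
  have h3 := Int.sub_one_lt_floor a
  have h4 := Int.sub_one_lt_floor b
  rw [abs_lt]
  push_cast
  constructor <;> linarith

/-- Discretization step of the Rounding procedure: round each probability
`qᵢ ∈ [0,1]` to a multiple of `1/z` while approximately preserving the sum. -/
theorem stmt_6 (n z : ℕ) (hz : 0 < z) (q : Fin n → ℝ)
    (hq : ∀ i, q i ∈ Set.Icc (0 : ℝ) 1) :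
    ∃ p : Fin n → ℝ,
      (∀ i, p i ∈ Set.Icc (0 : ℝ) 1) ∧
      (∀ i, ∃ m : ℕ, p i = (m : ℝ) / z) ∧
      (∀ i, |p i - q i| ≤ 1 / z) ∧
      (∀ i, q i = 0 → p i = 0) ∧
      |(∑ i, p i) - ∑ i, q i| ≤ 1 / z := by
  have hz' : (0 : ℝ) < z := by exact_mod_cast hz
  have hz1 : (1 : ℝ) ≤ z := by exact_mod_cast hz
  set g : ℕ → ℝ := fun i => if h : i < n then q ⟨i, h⟩ else 0 with hg
  set S : ℕ → ℝ := fun k => ∑ i ∈ Finset.range k, g i with hS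
  set F : ℕ → ℤ := fun k => ⌊(z : ℝ) * S k⌋ with hF
  -- key facts per index
  have hdiff : ∀ i : Fin n, (z : ℝ) * S (i + 1) - (z : ℝ) * S i = z * q i := by
    intro i
    have : S (i + 1) = S i + g i := by
      simp [hS, Finset.sum_range_succ]
    rw [this]
    have : g (i : ℕ) = q i := by simp [hg, i.isLt]
    rw [this]; ring
  have hclose : ∀ i : Fin n,
      |((F (i + 1) - F i : ℤ) : ℝ) - z * q i| < 1 := by
    intro i
    have := floor_diff_close ((z : ℝ) * S i) ((z : ℝ) * S (i + 1))
    rwa [hdiff i] at this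
  have hmono : ∀ i : Fin n, F i ≤ F (i + 1) := by
    intro i
    apply Int.floor_le_floor
    nlinarith [(hq i).1, hdiff i]
  refine ⟨fun i => ((F (i + 1) - F i : ℤ) : ℝ) / z, ?_, ?_, ?_, ?_, ?_⟩
  · intro i
    dsimp only
    have h1 := hclose i
    have h2 := hmono i
    rw [abs_lt] at h1
    constructor
    · apply div_nonneg _ hz'.le
      exact_mod_cast sub_nonneg.mpr h2
    · rw [div_le_one hz']
      have hqi := (hq i).2
      have hint : ((F (i + 1) - F i : ℤ) : ℝ) < z + 1 := by nlinarith
      have h3 : (F (i + 1) - F i : ℤ) < (z : ℤ) + 1 := by exact_mod_cast hint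
      have h4 : (F (i + 1) - F i : ℤ) ≤ z := by omega
      exact_mod_cast h4
  · intro i
    dsimp only
    refine ⟨(F (i + 1) - F i).toNat, ?_⟩
    have h2 := hmono i
    congr 1
    have h3 : ((F (i + 1) - F i).toNat : ℤ) = F (i + 1) - F i := Int.toNat_of_nonneg (by omega)
    exact_mod_cast h3.symm
  · intro i
    dsimp only
    have key : ((F (i + 1) - F i : ℤ) : ℝ) / z - q i
        = (((F (i + 1) - F i : ℤ) : ℝ) - z * q i) / z := by field_simp
    rw [key, abs_div, abs_of_pos hz']
    gcongr
    exact (hclose i).le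
  · intro i hqi
    dsimp only
    have h1 := hclose i
    have h2 := hmono i
    rw [hqi, mul_zero, sub_zero, abs_lt] at h1
    have hint : (F (i + 1) - F i : ℤ) < 1 := by exact_mod_cast h1.2
    have h0 : F (i + 1) - F i = 0 := by omega
    simp [h0]
  · have hsum : ∑ i : Fin n, ((F (i + 1) - F i : ℤ) : ℝ) / z
        = ((F n - F 0 : ℤ) : ℝ) / z := by
      rw [← Finset.sum_div]
      congr 1
      push_cast
      rw [Fin.sum_univ_eq_sum_range (fun k => ((F (k + 1) : ℝ) - (F k : ℝ)))]
      exact Finset.sum_range_sub (fun k => ((F k : ℝ))) n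
    have hF0 : F 0 = 0 := by simp [hF, hS]
    have hqsum : ∑ i, q i = S n := by
      show ∑ i : Fin n, q i = ∑ i ∈ Finset.range n, g i
      rw [← Fin.sum_univ_eq_sum_range]
      exact Finset.sum_congr rfl fun i _ => by simp [hg, i.isLt]
    rw [hsum, hF0, hqsum]
    have hFn : F n = ⌊(z : ℝ) * S n⌋ := rfl
    have h1 := Int.floor_le ((z : ℝ) * S n)
    have h2 := Int.sub_one_lt_floor ((z : ℝ) * S n)
    have key : ((F n - 0 : ℤ) : ℝ) / z - S n = (((F n : ℤ) : ℝ) - z * S n) / z := by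
      push_cast; field_simp; ring
    rw [key, abs_div, abs_of_pos hz']
    gcongr
    rw [hFn, abs_le]
    constructor <;> linarith
end

section
/- Let (x₁,…,x_p) be a mixed Nash equilibrium of a p-player game with s strategies per player and payoffs in [0,1], and let (x̂₁,…,x̂_p) be mixed strategies such that for all i, j: |x̂ᵢ(j) − xᵢ(j)| ≤ ε/(2ps), and x̂ᵢ(j) = 0 whenever xᵢ(j) = 0. Then (x̂₁,…,x̂_p) is an ε-approximate Nash equilibrium. -/
open Finset


/-- Expected utility of player `i` under a mixed strategy profile `x` in a
`p`-player game with `s` strategies per player. -/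
noncomputable def expUtil (p s : ℕ) (u : Fin p → (Fin p → Fin s) → ℝ)
    (x : Fin p → Fin s → ℝ) (i : Fin p) : ℝ :=
  ∑ a : Fin p → Fin s, (∏ j, x j (a j)) * u i a

/-- The profile `x` with player `i` deviating to the pure strategy `j`. -/
noncomputable def deviate (p s : ℕ) (x : Fin p → Fin s → ℝ) (i : Fin p)
    (j : Fin s) : Fin p → Fin s → ℝ :=
  Function.update x i (fun t => if t = j then 1 else 0)

/-- Total variation bound for product distributions. -/
lemma tv_prod (s : ℕ) : ∀ (n : ℕ) (y x : Fin n → Fin s → ℝ),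
    (∀ j t, 0 ≤ y j t) → (∀ j t, 0 ≤ x j t) →
    (∀ j, ∑ t, y j t = 1) → (∀ j, ∑ t, x j t = 1) →
    ∑ a : Fin n → Fin s, |(∏ j, y j (a j)) - ∏ j, x j (a j)| ≤
      ∑ j, ∑ t, |y j t - x j t| := by
  intro n
  induction n with
  | zero => intro y x _ _ _ _; simp
  | succ n ih =>
    intro y x hy hx hy1 hx1
    have key : ∑ a : Fin (n+1) → Fin s, |(∏ j, y j (a j)) - ∏ j, x j (a j)|
        = ∑ t : Fin s, ∑ a : Fin n → Fin s,
            |y 0 t * ∏ j : Fin n, y j.succ (a j) - x 0 t * ∏ j : Fin n, x j.succ (a j)| := by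
      rw [← (Fin.consEquiv (fun _ : Fin (n+1) => Fin s)).sum_comp
        (fun a => |(∏ j, y j (a j)) - ∏ j, x j (a j)|)]
      rw [Fintype.sum_prod_type]
      refine Finset.sum_congr rfl fun t _ => Finset.sum_congr rfl fun a _ => ?_
      simp [Fin.consEquiv, Fin.prod_univ_succ]
    rw [key]
    have htail : ∀ a : Fin n → Fin s, ∀ t : Fin s,
        |y 0 t * ∏ j : Fin n, y j.succ (a j) - x 0 t * ∏ j : Fin n, x j.succ (a j)|
        ≤ |y 0 t - x 0 t| * ∏ j : Fin n, y j.succ (a j)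
          + x 0 t * |(∏ j : Fin n, y j.succ (a j)) - ∏ j : Fin n, x j.succ (a j)| := by
      intro a t
      have : y 0 t * ∏ j : Fin n, y j.succ (a j) - x 0 t * ∏ j : Fin n, x j.succ (a j)
          = (y 0 t - x 0 t) * ∏ j : Fin n, y j.succ (a j)
            + x 0 t * ((∏ j : Fin n, y j.succ (a j)) - ∏ j : Fin n, x j.succ (a j)) := by ring
      rw [this]
      refine (abs_add_le _ _).trans ?_
      rw [abs_mul, abs_mul, abs_of_nonneg (Finset.prod_nonneg fun j _ => hy _ _),
        abs_of_nonneg (hx 0 t)]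
    have hsumy : ∀ a : Fin n → Fin s, (0:ℝ) ≤ ∏ j : Fin n, y j.succ (a j) :=
      fun a => Finset.prod_nonneg fun j _ => hy _ _
    calc ∑ t : Fin s, ∑ a : Fin n → Fin s,
            |y 0 t * ∏ j : Fin n, y j.succ (a j) - x 0 t * ∏ j : Fin n, x j.succ (a j)|
        ≤ ∑ t : Fin s, ∑ a : Fin n → Fin s,
            (|y 0 t - x 0 t| * ∏ j : Fin n, y j.succ (a j)
              + x 0 t * |(∏ j : Fin n, y j.succ (a j)) - ∏ j : Fin n, x j.succ (a j)|) := by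
          refine Finset.sum_le_sum fun t _ => Finset.sum_le_sum fun a _ => htail a t
      _ = (∑ t, |y 0 t - x 0 t|) * (∑ a : Fin n → Fin s, ∏ j : Fin n, y j.succ (a j))
            + (∑ t, x 0 t) * (∑ a : Fin n → Fin s,
                |(∏ j : Fin n, y j.succ (a j)) - ∏ j : Fin n, x j.succ (a j)|) := by
          simp [Finset.sum_add_distrib, ← Finset.mul_sum, ← Finset.sum_mul]
      _ ≤ (∑ t, |y 0 t - x 0 t|) * 1 + 1 * (∑ j : Fin n, ∑ t, |y j.succ t - x j.succ t|) := by
          have h1 : (∑ a : Fin n → Fin s, ∏ j : Fin n, y j.succ (a j)) = 1 := by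
            rw [← Fintype.piFinset_univ, ← Finset.prod_univ_sum]
            simp [hy1]
          rw [h1, hx1]
          refine add_le_add le_rfl ?_
          rw [one_mul, one_mul]
          exact ih (fun j => y j.succ) (fun j => x j.succ) (fun j t => hy _ _)
            (fun j t => hx _ _) (fun j => hy1 _) (fun j => hx1 _)
      _ = ∑ j : Fin (n+1), ∑ t, |y j t - x j t| := by
          rw [Fin.sum_univ_succ]; ring

lemma expUtil_close (p s : ℕ) (u : Fin p → (Fin p → Fin s) → ℝ)
    (hu : ∀ i a, u i a ∈ Set.Icc (0 : ℝ) 1)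
    (y x : Fin p → Fin s → ℝ)
    (hy : ∀ j t, 0 ≤ y j t) (hx : ∀ j t, 0 ≤ x j t)
    (hy1 : ∀ j, ∑ t, y j t = 1) (hx1 : ∀ j, ∑ t, x j t = 1)
    (δ : ℝ) (hclose : ∀ j t, |y j t - x j t| ≤ δ) (i : Fin p) :
    |expUtil p s u y i - expUtil p s u x i| ≤ p * s * δ := by
  have h1 : |expUtil p s u y i - expUtil p s u x i|
      ≤ ∑ a : Fin p → Fin s, |(∏ j, y j (a j)) - ∏ j, x j (a j)| := by
    rw [expUtil, expUtil, ← Finset.sum_sub_distrib]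
    refine (Finset.abs_sum_le_sum_abs _ _).trans (Finset.sum_le_sum fun a _ => ?_)
    rw [← sub_mul, abs_mul]
    have := hu i a
    have hab : |u i a| ≤ 1 := abs_le.2 ⟨by linarith [this.1], this.2⟩
    calc |(∏ j, y j (a j)) - ∏ j, x j (a j)| * |u i a|
        ≤ |(∏ j, y j (a j)) - ∏ j, x j (a j)| * 1 := by
          gcongr
      _ = _ := mul_one _
  refine h1.trans ((tv_prod s p y x hy hx hy1 hx1).trans ?_)
  calc ∑ j : Fin p, ∑ t : Fin s, |y j t - x j t|
      ≤ ∑ _j : Fin p, ∑ _t : Fin s, δ :=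
        Finset.sum_le_sum fun j _ => Finset.sum_le_sum fun t _ => hclose j t
    _ = p * s * δ := by simp [mul_assoc]

/-- Perturbation lemma: if `(x₁,…,x_p)` is a mixed Nash equilibrium of a
`p`-player game with `s` strategies and payoffs in `[0,1]`, and `(x̂₁,…,x̂_p)`
satisfies `|x̂ᵢ(j) − xᵢ(j)| ≤ ε/(2ps)` with the same supports, then
`(x̂₁,…,x̂_p)` is an `ε`-approximate Nash equilibrium. -/
theorem stmt_8 (p s : ℕ) (hp : 0 < p) (hs : 0 < s) (ε : ℝ) (hε : 0 < ε)
    (u : Fin p → (Fin p → Fin s) → ℝ)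
    (hu : ∀ i a, u i a ∈ Set.Icc (0 : ℝ) 1)
    (x xh : Fin p → Fin s → ℝ)
    (hx : ∀ i j, 0 ≤ x i j) (hx1 : ∀ i, ∑ j, x i j = 1)
    (hxh : ∀ i j, 0 ≤ xh i j) (hxh1 : ∀ i, ∑ j, xh i j = 1)
    (hNash : ∀ i j, expUtil p s u (deviate p s x i j) i ≤ expUtil p s u x i)
    (hclose : ∀ i j, |xh i j - x i j| ≤ ε / (2 * p * s))
    (hsupp : ∀ i j, x i j = 0 → xh i j = 0) :
    ∀ i j, expUtil p s u (deviate p s xh i j) i ≤ expUtil p s u xh i + ε := by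
  intro i j
  set δ := ε / (2 * p * s) with hδdef
  have hps : (0:ℝ) < p * s := by positivity
  have hδ : 0 ≤ δ := le_of_lt (by positivity)
  have hhalf : (p:ℝ) * s * δ = ε / 2 := by
    rw [hδdef]; field_simp
  -- deviate profiles are valid distributions
  have hdev_nonneg : ∀ z : Fin p → Fin s → ℝ, (∀ k t, 0 ≤ z k t) →
      ∀ k t, 0 ≤ deviate p s z i j k t := by
    intro z hz k t
    unfold deviate
    rcases eq_or_ne k i with rfl | hk
    · simp only [Function.update_self]; positivity
    · rw [Function.update_of_ne hk]; exact hz k t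
  have hdev_sum : ∀ z : Fin p → Fin s → ℝ, (∀ k, ∑ t, z k t = 1) →
      ∀ k, ∑ t, deviate p s z i j k t = 1 := by
    intro z hz k
    unfold deviate
    rcases eq_or_ne k i with rfl | hk
    · simp
    · rw [Function.update_of_ne hk]; exact hz k
  have hdev_close : ∀ k t, |deviate p s xh i j k t - deviate p s x i j k t| ≤ δ := by
    intro k t
    unfold deviate
    rcases eq_or_ne k i with rfl | hk
    · simp [hδ]
    · rw [Function.update_of_ne hk, Function.update_of_ne hk]; exact hclose k t
  have h1 := expUtil_close p s u hu (deviate p s xh i j) (deviate p s x i j)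
    (hdev_nonneg xh hxh) (hdev_nonneg x hx) (hdev_sum xh hxh1) (hdev_sum x hx1)
    δ hdev_close i
  have h2 := expUtil_close p s u hu xh x hxh hx hxh1 hx1 δ hclose i
  rw [hhalf] at h1 h2
  have h1' := abs_le.1 h1
  have h2' := abs_le.1 h2
  have := hNash i j
  linarith [h1'.2, h2'.1]
end

section
/- Let T(2) = 1 and, for n ≥ 3, T(n) = 2·T(2)·(n−1)·T(n−1) + ∑_{j=3}^{n−1} (j−1)·T(j)·max{T(n−j), T(n+1−j)} (with T(m) interpreted as 1 for m ≤ 2). Then T(k) ≤ k^{k²} for all k ≥ 2. -/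
/-- The recurrence bounding the number of tree topologies produced by the
Trickle-Down Process: `T(m) = 1` for `m ≤ 2` and, for `n ≥ 3`,
`T(n) = 2·T(2)·(n−1)·T(n−1) + ∑_{j=3}^{n−1} (j−1)·T(j)·max{T(n−j), T(n+1−j)}`. -/
def T : ℕ → ℕ
  | 0 => 1
  | 1 => 1
  | 2 => 1
  | (n + 3) =>
      2 * T 2 * (n + 2) * T (n + 2) +
        ∑ j ∈ (Finset.Icc 3 (n + 2)).attach,
          (j.1 - 1) * T j.1 * max (T (n + 3 - j.1)) (T (n + 4 - j.1))
  termination_by n => n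
  decreasing_by
  · simp
  · omega
  · have := Finset.mem_Icc.mp j.2; omega
  · have := Finset.mem_Icc.mp j.2; omega
  · have := Finset.mem_Icc.mp j.2; omega

lemma T_le (n : ℕ) : T n ≤ n ^ (n ^ 2) := by
  induction n using Nat.strong_induction_on with
  | _ n ih =>
    rcases n with _ | _ | _ | m
    · simp [T]
    · simp [T]
    · simp [T]
    · have hT2 : T 2 = 1 := by simp [T]
      have key : ∀ j ∈ Finset.Icc 3 (m+2),
          (j - 1) * T j * max (T (m+3-j)) (T (m+4-j)) ≤ (m+3) ^ (m^2+6*m+7) := by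
        intro j hj
        rw [Finset.mem_Icc] at hj
        obtain ⟨hj3, hjm⟩ := hj
        have hTj : T j ≤ (m+3) ^ (j^2) :=
          le_trans (ih j (by omega)) (Nat.pow_le_pow_left (by omega) _)
        have hTa : T (m+3-j) ≤ (m+3) ^ ((m+4-j)^2) := by
          refine le_trans (ih _ (by omega)) ?_
          refine le_trans (Nat.pow_le_pow_left (show m+3-j ≤ m+3 by omega) _)
            (Nat.pow_le_pow_right (by omega) ?_)
          exact Nat.pow_le_pow_left (by omega) 2
        have hTb : T (m+4-j) ≤ (m+3) ^ ((m+4-j)^2) :=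
          le_trans (ih _ (by omega)) (Nat.pow_le_pow_left (by omega) _)
        have hmax : max (T (m+3-j)) (T (m+4-j)) ≤ (m+3) ^ ((m+4-j)^2) := max_le hTa hTb
        have hexp : 1 + (j^2 + (m+4-j)^2) ≤ m^2+6*m+7 := by
          have hb : j + (m+4-j) = m+4 := by omega
          set b := m+4-j with hbdef
          have hb2 : 2 ≤ b := by omega
          have hm1 : 1 ≤ m := by omega
          have hjb : m+5 ≤ j*b := by nlinarith
          have h3 : (j+b)*(j+b) = (m+4)*(m+4) := by rw [hb]
          nlinarith [h3, hjb]
        calc (j-1) * T j * max (T (m+3-j)) (T (m+4-j))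
            ≤ (m+3) * (m+3)^(j^2) * ((m+3)^((m+4-j)^2)) :=
              Nat.mul_le_mul (Nat.mul_le_mul (by omega) hTj) hmax
          _ = (m+3) ^ (1 + (j^2 + (m+4-j)^2)) := by ring
          _ ≤ (m+3) ^ (m^2+6*m+7) := Nat.pow_le_pow_right (by omega) hexp
      have hsum : ∑ j ∈ (Finset.Icc 3 (m+2)).attach,
          (j.1 - 1) * T j.1 * max (T (m+3-j.1)) (T (m+4-j.1)) ≤ m * (m+3)^(m^2+6*m+7) := by
        calc ∑ j ∈ (Finset.Icc 3 (m+2)).attach,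
              (j.1 - 1) * T j.1 * max (T (m+3-j.1)) (T (m+4-j.1))
            ≤ ∑ _j ∈ (Finset.Icc 3 (m+2)).attach, (m+3)^(m^2+6*m+7) :=
              Finset.sum_le_sum (fun j _ => key j.1 j.2)
          _ = (Finset.Icc 3 (m+2)).attach.card * (m+3)^(m^2+6*m+7) := by
              rw [Finset.sum_const, smul_eq_mul]
          _ = m * (m+3)^(m^2+6*m+7) := by
              rw [Finset.card_attach, Nat.card_Icc]; congr 1
      have hTm2 : T (m+2) ≤ (m+3)^(m^2+4*m+4) := by
        refine le_trans (ih (m+2) (by omega)) ?_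
        have h := Nat.pow_le_pow_left (show m+2 ≤ m+3 by omega) ((m+2)^2)
        refine le_trans h (le_of_eq ?_)
        congr 1
        ring
      have hfirst : 2 * T 2 * (m+2) * T (m+2) ≤ (m+3)^(m^2+6*m+8) := by
        rw [hT2]
        calc 2 * 1 * (m+2) * T (m+2)
            ≤ 2 * 1 * (m+2) * ((m+3)^(m^2+4*m+4)) := Nat.mul_le_mul_left _ hTm2
          _ ≤ (m+3)*(m+3) * ((m+3)^(m^2+4*m+4)) := by
              refine Nat.mul_le_mul_right _ ?_
              nlinarith
          _ = (m+3)^(m^2+4*m+6) := by ring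
          _ ≤ (m+3)^(m^2+6*m+8) := Nat.pow_le_pow_right (by omega) (by omega)
      have : T (m+3) = 2 * T 2 * (m + 2) * T (m + 2) +
          ∑ j ∈ (Finset.Icc 3 (m + 2)).attach,
            (j.1 - 1) * T j.1 * max (T (m + 3 - j.1)) (T (m + 4 - j.1)) := by
        conv_lhs => rw [T]
      rw [this]
      calc 2 * T 2 * (m + 2) * T (m + 2) +
          ∑ j ∈ (Finset.Icc 3 (m + 2)).attach,
            (j.1 - 1) * T j.1 * max (T (m + 3 - j.1)) (T (m + 4 - j.1))
          ≤ (m+3)^(m^2+6*m+8) + m * (m+3)^(m^2+6*m+7) := Nat.add_le_add hfirst hsum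
        _ ≤ (m+3)^(m^2+6*m+8) + (m+3) * (m+3)^(m^2+6*m+7) :=
            Nat.add_le_add_left (Nat.mul_le_mul_right _ (by omega)) _
        _ = 2 * (m+3)^(m^2+6*m+8) := by ring
        _ ≤ (m+3) * (m+3)^(m^2+6*m+8) := Nat.mul_le_mul_right _ (by omega)
        _ = (m+3)^(m^2+6*m+9) := by ring
        _ = (m+3)^((m+3)^2) := by congr 1; ring


/-- `T(k) ≤ k^{k²}` for all `k ≥ 2`. -/
theorem stmt_11 (k : ℕ) (hk : 2 ≤ k) : T k ≤ k ^ (k ^ 2) := by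
  exact T_le k
end
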